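/- Let AC(X) be a deterministic, decomposable, and smooth arithmetic circuit that computes a factor f(X). For every full instantiation x with f(x) > 0, the circuit contains a unique x-subcircuit with non-zero coefficient, and its coefficient equals f(x). -/
import Mathlib


/-- An arithmetic circuit over variables `ι` with values `α`: leaves are indicator
variables `λ_{i,v}` or real parameters; internal nodes are sums or products. -/
inductive AC (ι α : Type) : Type where
  | ind (i : ι) (v : α)
  | param (θ : ℝ)
  | sum (l r : AC ι α)
  | prod (l r : AC ι α)

namespace AC

variable {ι α : Type} [Fintype ι] [DecidableEq ι] [Fintype α] [DecidableEq α]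

/-- Evaluate the circuit under a circuit input `Λ` assigning 0/1 to each indicator. -/
def eval (Λ : ι → α → Bool) : AC ι α → ℝ
  | ind i v => if Λ i v then 1 else 0
  | param θ => θ
  | sum l r => l.eval Λ + r.eval Λ
  | prod l r => l.eval Λ * r.eval Λ

/-- Evaluate the maximizer circuit (sum nodes replaced by max nodes). -/
def evalMax (Λ : ι → α → Bool) : AC ι α → ℝ
  | ind i v => if Λ i v then 1 else 0
  | param θ => θ
  | sum l r => max (l.evalMax Λ) (r.evalMax Λ)
  | prod l r => l.evalMax Λ * r.evalMax Λ

/-- The circuit input corresponding to a full instantiation `x`. -/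
def inputOf (x : ι → α) : ι → α → Bool := fun i v => decide (x i = v)

/-- The circuit input corresponding to a partial instantiation `y`:
an indicator is set to 1 iff its value is compatible with `y`. -/
def pinputOf (y : ι → Option α) : ι → α → Bool := fun i v =>
  match y i with
  | none => true
  | some w => decide (w = v)

/-- The value `AC(x)` of the circuit at a full instantiation `x`. -/
def evalAt (x : ι → α) (c : AC ι α) : ℝ := c.eval (inputOf x)

/-- The value `AC(y)` of the circuit at a partial instantiation `y`. -/
def evalP (y : ι → Option α) (c : AC ι α) : ℝ := c.eval (pinputOf y)

/-- Maximizer-circuit value at a full instantiation. -/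
def evalMaxAt (x : ι → α) (c : AC ι α) : ℝ := c.evalMax (inputOf x)

/-- Maximizer-circuit value at a partial instantiation. -/
def evalMaxP (y : ι → Option α) (c : AC ι α) : ℝ := c.evalMax (pinputOf y)

/-- `vars n`: variables with some indicator at or under the node. -/
def vars : AC ι α → Finset ι
  | ind i _ => {i}
  | param _ => ∅
  | sum l r => l.vars ∪ r.vars
  | prod l r => l.vars ∪ r.vars

/-- The multiset of parameters appearing in the circuit. -/
def params : AC ι α → Multiset ℝ
  | ind _ _ => 0
  | param θ => {θ}
  | sum l r => l.params + r.params
  | prod l r => l.params + r.params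

/-- Decomposability: children of every `*`-node have disjoint variable sets. -/
def Decomposable : AC ι α → Prop
  | ind _ _ => True
  | param _ => True
  | sum l r => l.Decomposable ∧ r.Decomposable
  | prod l r => Disjoint l.vars r.vars ∧ l.Decomposable ∧ r.Decomposable

/-- Smoothness: every child of a `+`-node mentions the same variables as the node. -/
def Smooth : AC ι α → Prop
  | ind _ _ => True
  | param _ => True
  | sum l r => l.vars = r.vars ∧ l.Smooth ∧ r.Smooth
  | prod l r => l.Smooth ∧ r.Smooth

/-- Determinism: under every full instantiation, every `+`-node has at most one
non-zero input. -/
def Deterministic : AC ι α → Prop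
  | ind _ _ => True
  | param _ => True
  | sum l r => (∀ x : ι → α, l.evalAt x = 0 ∨ r.evalAt x = 0) ∧
      l.Deterministic ∧ r.Deterministic
  | prod l r => l.Deterministic ∧ r.Deterministic

/-- A full instantiation `x` is compatible with a partial instantiation `y`. -/
def Compat (x : ι → α) (y : ι → Option α) : Prop :=
  ∀ i, y i = none ∨ y i = some (x i)

instance (x : ι → α) (y : ι → Option α) : Decidable (Compat x y) := by
  unfold Compat; infer_instance

/-- The graph of a full instantiation, i.e. its term `{(i, x i) | i}`. -/
def graphOf (x : ι → α) : Finset (ι × α) := Finset.univ.image fun i => (i, x i)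

/-- The marginal `Σ_{x ∼ y} f(x)` of a factor `f` at a partial instantiation `y`. -/
def margSum (f : (ι → α) → ℝ) (y : ι → Option α) : ℝ :=
  ∑ x : ι → α, if Compat x y then f x else 0

/-- The circuit computes the factor `f`. -/
def Computes (c : AC ι α) (f : (ι → α) → ℝ) : Prop := ∀ x, c.evalAt x = f x

/-- The circuit computes the marginals of the factor `f`. -/
def ComputesMarginals (c : AC ι α) (f : (ι → α) → ℝ) : Prop :=
  ∀ y : ι → Option α, c.evalP y = margSum f y

/-- The multiset of (term, coefficient) pairs of all complete subcircuits. -/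
def subs : AC ι α → Multiset (Finset (ι × α) × ℝ)
  | ind i v => {({(i, v)}, 1)}
  | param θ => {(∅, θ)}
  | sum l r => l.subs + r.subs
  | prod l r => l.subs.bind fun a => r.subs.map fun b => (a.1 ∪ b.1, a.2 * b.2)

/-- Complete subcircuits of a circuit: choose one child of each `+`-node and all
children of each `*`-node. -/
inductive Sub : AC ι α → Type where
  | ind (i : ι) (v : α) : Sub (AC.ind i v)
  | param (θ : ℝ) : Sub (AC.param θ)
  | sumL {l r : AC ι α} : Sub l → Sub (AC.sum l r)
  | sumR {l r : AC ι α} : Sub r → Sub (AC.sum l r)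
  | prod {l r : AC ι α} : Sub l → Sub r → Sub (AC.prod l r)

/-- The term of a complete subcircuit: the set of indicator values appearing in it. -/
def Sub.term : {c : AC ι α} → Sub c → Finset (ι × α)
  | _, .ind i v => {(i, v)}
  | _, .param _ => ∅
  | _, .sumL s => s.term
  | _, .sumR s => s.term
  | _, .prod s t => s.term ∪ t.term

/-- The coefficient of a complete subcircuit: the product of its parameters. -/
def Sub.coeff : {c : AC ι α} → Sub c → ℝ
  | _, .ind _ _ => 1
  | _, .param θ => θ
  | _, .sumL s => s.coeff
  | _, .sumR s => s.coeff
  | _, .prod s t => s.coeff * t.coeff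


end AC


namespace AC

variable {ι α : Type} [Fintype ι] [DecidableEq ι] [Fintype α] [DecidableEq α]

/-- The term determined by a variable set and a full instantiation. -/
def svg (n : AC ι α) (x : ι → α) : Finset (ι × α) := n.vars.image (fun i => (i, x i))

lemma term_fst {n : AC ι α} (hs : n.Smooth) (s : Sub n) :
    s.term.image Prod.fst = n.vars := by
  induction s with
  | ind i v => simp [Sub.term, vars]
  | param θ => simp [Sub.term, vars]
  | sumL s ih =>
      obtain ⟨h1, h2, h3⟩ := hs
      simp only [Sub.term, vars, ih h2, h1, Finset.union_self]
  | sumR s ih =>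
      obtain ⟨h1, h2, h3⟩ := hs
      simp only [Sub.term, vars, ih h3, h1, Finset.union_self]
  | prod s t ihs iht =>
      obtain ⟨h1, h2⟩ := hs
      simp [Sub.term, vars, Finset.image_union, ihs h1, iht h2]

lemma split_union {V1 V2 : Finset ι} {A B C D : Finset (ι × α)}
    (hA : ∀ p ∈ A, p.1 ∈ V1) (hB : ∀ p ∈ B, p.1 ∈ V2)
    (hC : ∀ p ∈ C, p.1 ∈ V1) (hD : ∀ p ∈ D, p.1 ∈ V2)
    (hdisj : Disjoint V1 V2) (h : A ∪ B = C ∪ D) : A = C ∧ B = D := by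
  constructor <;> ext p <;> constructor <;> intro hp
  · have : p ∈ C ∪ D := h ▸ Finset.mem_union_left _ hp
    rcases Finset.mem_union.1 this with h' | h'
    · exact h'
    · exact absurd (hA p hp) (fun hv => Finset.disjoint_left.1 hdisj hv (hD p h'))
  · have : p ∈ A ∪ B := h ▸ Finset.mem_union_left _ hp
    rcases Finset.mem_union.1 this with h' | h'
    · exact h'
    · exact absurd (hC p hp) (fun hv => Finset.disjoint_left.1 hdisj hv (hB p h'))
  · have : p ∈ C ∪ D := h ▸ Finset.mem_union_right _ hp
    rcases Finset.mem_union.1 this with h' | h'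
    · exact absurd (hB p hp) (fun hv => Finset.disjoint_left.1 hdisj (hC p h') hv)
    · exact h'
  · have : p ∈ A ∪ B := h ▸ Finset.mem_union_right _ hp
    rcases Finset.mem_union.1 this with h' | h'
    · exact absurd (hD p hp) (fun hv => Finset.disjoint_left.1 hdisj (hA p h') hv)
    · exact h'

lemma mem_fst_of_image {s : Finset (ι × α)} {V : Finset ι}
    (h : s.image Prod.fst = V) : ∀ p ∈ s, p.1 ∈ V := by
  intro p hp; rw [← h]; exact Finset.mem_image_of_mem _ hp

lemma svg_fst (n : AC ι α) (x : ι → α) : ∀ p ∈ svg n x, p.1 ∈ n.vars := by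
  intro p hp
  obtain ⟨i, hi, rfl⟩ := Finset.mem_image.1 hp
  exact hi

theorem main_ind (n : AC ι α) (hdet : n.Deterministic) (hd : n.Decomposable)
    (hs : n.Smooth) (x : ι → α) :
    (∀ t : Sub n, t.term = svg n x → t.coeff ≠ 0 → t.coeff = n.evalAt x) ∧
    (∀ t t' : Sub n, t.term = svg n x → t.coeff ≠ 0 →
        t'.term = svg n x → t'.coeff ≠ 0 → t = t') ∧
    (n.evalAt x ≠ 0 → ∃ s : Sub n, s.term = svg n x ∧ s.coeff = n.evalAt x) := by
  induction n with
  | ind i v =>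
      refine ⟨?_, ?_, ?_⟩
      · rintro t ht _
        cases t
        simp only [svg, vars, Finset.image_singleton, Sub.term] at ht
        have : v = x i := by
          have := Finset.mem_singleton.1 (ht ▸ Finset.mem_singleton_self (i, v))
          exact (Prod.mk.injEq _ _ _ _ ▸ this).2
        simp [Sub.coeff, evalAt, eval, inputOf, this]
      · intro t t' _ _ _ _; cases t; cases t'; rfl
      · intro h
        simp only [evalAt, eval, inputOf] at h ⊢
        by_cases hxi : x i = v
        · exact ⟨.ind i v, by simp [Sub.term, svg, vars, hxi], by simp [Sub.coeff, hxi]⟩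
        · simp [hxi] at h
  | param θ =>
      refine ⟨?_, ?_, ?_⟩
      · rintro t _ _; cases t; rfl
      · intro t t' _ _ _ _; cases t; cases t'; rfl
      · intro _; exact ⟨.param θ, by simp [Sub.term, svg, vars], rfl⟩
  | sum l r ihl ihr =>
      obtain ⟨hdet1, hdetl, hdetr⟩ := hdet
      obtain ⟨hdl, hdr⟩ := hd
      obtain ⟨hvars, hsl, hsr⟩ := hs
      obtain ⟨cl, ul, el⟩ := ihl hdetl hdl hsl
      obtain ⟨cr, ur, er⟩ := ihr hdetr hdr hsr
      have hsvgl : svg (AC.sum l r) x = svg l x := by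
        simp [svg, vars, hvars]
      have hsvgr : svg (AC.sum l r) x = svg r x := by
        simp [svg, vars, hvars]
      have heval : (AC.sum l r).evalAt x = l.evalAt x + r.evalAt x := rfl
      refine ⟨?_, ?_, ?_⟩
      · intro t ht hc0
        cases t with
        | sumL s =>
            have := cl s (by rw [← hsvgl]; exact ht) hc0
            have hr0 : r.evalAt x = 0 := by
              rcases hdet1 x with h | h
              · rw [h] at this; exact absurd this hc0
              · exact h
            simp only [Sub.coeff, heval, hr0, add_zero]; exact this
        | sumR s =>
            have := cr s (by rw [← hsvgr]; exact ht) hc0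
            have hl0 : l.evalAt x = 0 := by
              rcases hdet1 x with h | h
              · exact h
              · rw [h] at this; exact absurd this hc0
            simp only [Sub.coeff, heval, hl0, zero_add]; exact this
      · intro t t' ht hc0 ht' hc0'
        cases t with
        | sumL s =>
            cases t' with
            | sumL s' =>
                have := ul s s' (by rw [← hsvgl]; exact ht) hc0
                  (by rw [← hsvgl]; exact ht') hc0'
                rw [this]
            | sumR s' =>
                exfalso
                have h1 := cl s (by rw [← hsvgl]; exact ht) hc0
                have h2 := cr s' (by rw [← hsvgr]; exact ht') hc0'
                rcases hdet1 x with h | h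
                · exact hc0 (h1.trans h)
                · exact hc0' (h2.trans h)
        | sumR s =>
            cases t' with
            | sumL s' =>
                exfalso
                have h1 := cr s (by rw [← hsvgr]; exact ht) hc0
                have h2 := cl s' (by rw [← hsvgl]; exact ht') hc0'
                rcases hdet1 x with h | h
                · exact hc0' (h2.trans h)
                · exact hc0 (h1.trans h)
            | sumR s' =>
                have := ur s s' (by rw [← hsvgr]; exact ht) hc0
                  (by rw [← hsvgr]; exact ht') hc0'
                rw [this]
      · intro h
        rw [heval] at h
        rcases hdet1 x with h0 | h0
        · have hr : r.evalAt x ≠ 0 := by intro h'; rw [h0, h'] at h; simp at h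
          obtain ⟨s, hst, hsc⟩ := er hr
          exact ⟨.sumR s, by rw [hsvgr]; exact hst,
            by simp [Sub.coeff, hsc, heval, h0]⟩
        · have hl : l.evalAt x ≠ 0 := by intro h'; rw [h0, h'] at h; simp at h
          obtain ⟨s, hst, hsc⟩ := el hl
          exact ⟨.sumL s, by rw [hsvgl]; exact hst,
            by simp [Sub.coeff, hsc, heval, h0]⟩
  | prod l r ihl ihr =>
      obtain ⟨hdetl, hdetr⟩ := hdet
      obtain ⟨hdisj, hdl, hdr⟩ := hd
      obtain ⟨hsl, hsr⟩ := hs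
      obtain ⟨cl, ul, el⟩ := ihl hdetl hdl hsl
      obtain ⟨cr, ur, er⟩ := ihr hdetr hdr hsr
      have hsvg : svg (AC.prod l r) x = svg l x ∪ svg r x := by
        simp [svg, vars, Finset.image_union]
      have heval : (AC.prod l r).evalAt x = l.evalAt x * r.evalAt x := rfl
      have hterm : ∀ (a : Sub l) (b : Sub r),
          (Sub.prod a b).term = svg (AC.prod l r) x →
          a.term = svg l x ∧ b.term = svg r x := by
        intro a b hab
        simp only [Sub.term, hsvg] at hab
        exact split_union (mem_fst_of_image (term_fst hsl a))
          (mem_fst_of_image (term_fst hsr b)) (svg_fst l x) (svg_fst r x) hdisj hab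
      refine ⟨?_, ?_, ?_⟩
      · intro t ht hc0
        cases t with
        | prod a b =>
            obtain ⟨ha, hb⟩ := hterm a b ht
            simp only [Sub.coeff, mul_ne_zero_iff] at hc0
            simp only [Sub.coeff, heval, cl a ha hc0.1, cr b hb hc0.2]
      · intro t t' ht hc0 ht' hc0'
        cases t with
        | prod a b =>
            cases t' with
            | prod a' b' =>
                obtain ⟨ha, hb⟩ := hterm a b ht
                obtain ⟨ha', hb'⟩ := hterm a' b' ht'
                simp only [Sub.coeff, mul_ne_zero_iff] at hc0 hc0'
                rw [ul a a' ha hc0.1 ha' hc0'.1, ur b b' hb hc0.2 hb' hc0'.2]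
      · intro h
        rw [heval, mul_ne_zero_iff] at h
        obtain ⟨a, hat, hac⟩ := el h.1
        obtain ⟨b, hbt, hbc⟩ := er h.2
        exact ⟨.prod a b, by simp [Sub.term, hsvg, hat, hbt],
          by simp [Sub.coeff, hac, hbc, heval]⟩

end AC


/-- In a deterministic, decomposable and smooth circuit computing a factor `f`,
every full instantiation `x` with `f(x) > 0` has a unique `x`-subcircuit with
non-zero coefficient, and its coefficient is `f(x)`. -/
theorem stmt6 {ι α : Type} [Fintype ι] [DecidableEq ι] [Fintype α] [DecidableEq α]
    (c : AC ι α) (hdet : c.Deterministic) (hd : c.Decomposable) (hs : c.Smooth)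
    (hv : c.vars = Finset.univ) (f : (ι → α) → ℝ) (hf : ∀ x, 0 ≤ f x)
    (hc : c.Computes f) (x : ι → α) (hx : 0 < f x) :
    ∃ s : AC.Sub c, (s.term = AC.graphOf x ∧ s.coeff = f x) ∧
      ∀ t : AC.Sub c, t.term = AC.graphOf x → t.coeff ≠ 0 → t = s := by
  have hsvg : AC.svg c x = AC.graphOf x := by
    simp [AC.svg, AC.graphOf, hv]
  have hfx : c.evalAt x ≠ 0 := by rw [hc x]; exact ne_of_gt hx
  obtain ⟨cl, ul, el⟩ := AC.main_ind c hdet hd hs x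
  obtain ⟨s, hst, hsc⟩ := el hfx
  refine ⟨s, ⟨hsvg ▸ hst, by rw [hsc, hc x]⟩, ?_⟩
  intro t ht htc
  exact ul t s (hsvg ▸ ht) htc hst (by rw [hsc]; exact hfx)
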